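/- arXiv:1612.07972 — 2 statements merged into one kernel-verified Lean document; each statement's English description precedes it below -/
import Mathlib

section
/- Let X : H^d → H be a row contraction and L ⊆ H a closed subspace that is invariant for each X_k* and on which X* := (X₁*,...,X_d*)ᵀ acts isometrically (Σ‖X_k* l‖² = ‖l‖² for l ∈ L). Then for every z ∈ 𝔹^d, L ⊆ ran((I - z X*)(X restricted to its initial space)), i.e., L ⊆ Ran_z(X) when X is a row partial isometry. -/
open ContinuousLinearMap

set_option synthInstance.maxHeartbeats 1000000
set_option maxHeartbeats 1000000

noncomputable section

instance piLpComplete {d : ℕ} {H : Type*} [NormedAddCommGroup H]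
    [InnerProductSpace ℂ H] [CompleteSpace H] :
    CompleteSpace (PiLp 2 fun _ : Fin d => H) :=
  inferInstance

/-- The row operator `z : H^d → H`, `(h₁,...,h_d) ↦ Σ zⱼ hⱼ`, for a scalar row `z ∈ ℂ^d`. -/
def rowOp {d : ℕ} {H : Type*} [NormedAddCommGroup H] [InnerProductSpace ℂ H]
    (z : EuclideanSpace ℂ (Fin d)) : PiLp 2 (fun _ : Fin d => H) →L[ℂ] H :=
  ∑ j, z j • ((ContinuousLinearMap.proj j : (∀ _ : Fin d, H) →L[ℂ] H).comp
    (PiLp.continuousLinearEquiv 2 ℂ (fun _ : Fin d => H)).toContinuousLinearMap)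

/-- The column operator `z* : H → H^d`, `h ↦ (z̄₁ h, ..., z̄_d h)`; the adjoint of `rowOp z`. -/
def colOp {d : ℕ} {H : Type*} [NormedAddCommGroup H] [InnerProductSpace ℂ H]
    (z : EuclideanSpace ℂ (Fin d)) : H →L[ℂ] PiLp 2 (fun _ : Fin d => H) :=
  ((PiLp.continuousLinearEquiv 2 ℂ (fun _ : Fin d => H)).symm.toContinuousLinearMap).comp
    (ContinuousLinearMap.pi fun j => (starRingEnd ℂ (z j)) • ContinuousLinearMap.id ℂ H)

/-- Ampliation `A ⊗ I_d` of an operator `A : H → J` acting componentwise on columns. -/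
def liftD {d : ℕ} {H J : Type*} [NormedAddCommGroup H] [InnerProductSpace ℂ H]
    [NormedAddCommGroup J] [InnerProductSpace ℂ J] (A : H →L[ℂ] J) :
    PiLp 2 (fun _ : Fin d => H) →L[ℂ] PiLp 2 (fun _ : Fin d => J) :=
  ((PiLp.continuousLinearEquiv 2 ℂ (fun _ : Fin d => J)).symm.toContinuousLinearMap).comp <|
    (ContinuousLinearMap.pi fun j =>
      A.comp ((ContinuousLinearMap.proj j : (∀ _ : Fin d, H) →L[ℂ] H))).comp
    (PiLp.continuousLinearEquiv 2 ℂ (fun _ : Fin d => H)).toContinuousLinearMap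

lemma rowOp_apply {d : ℕ} {H : Type*} [NormedAddCommGroup H] [InnerProductSpace ℂ H]
    (z : EuclideanSpace ℂ (Fin d)) (h : PiLp 2 (fun _ : Fin d => H)) :
    rowOp z h = ∑ j, z j • h j := by
  simp [rowOp]

lemma rowOp_norm_apply_le {d : ℕ} {H : Type*} [NormedAddCommGroup H] [InnerProductSpace ℂ H]
    (z : EuclideanSpace ℂ (Fin d)) (h : PiLp 2 (fun _ : Fin d => H)) :
    ‖rowOp z h‖ ≤ ‖z‖ * ‖h‖ := by
  rw [rowOp_apply]
  set f : EuclideanSpace ℝ (Fin d) := (WithLp.equiv 2 _).symm fun j => ‖z j‖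
  set g : EuclideanSpace ℝ (Fin d) := (WithLp.equiv 2 _).symm fun j => ‖h j‖
  have h1 : ‖∑ j, z j • h j‖ ≤ ∑ j, ‖z j‖ * ‖h j‖ := by
    refine (norm_sum_le _ _).trans_eq ?_
    simp [norm_smul]
  have h2 : (∑ j, ‖z j‖ * ‖h j‖) = (inner ℝ f g : ℝ) := by
    simp [f, g, PiLp.inner_apply, mul_comm]
  have h3 : (inner ℝ f g : ℝ) ≤ ‖f‖ * ‖g‖ := real_inner_le_norm f g
  have hf : ‖f‖ = ‖z‖ := by
    rw [EuclideanSpace.norm_eq, EuclideanSpace.norm_eq]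
    congr 1
    apply Finset.sum_congr rfl
    intro j _
    simp [f]
  have hg : ‖g‖ = ‖h‖ := by
    rw [EuclideanSpace.norm_eq, PiLp.norm_eq_of_L2]
    congr 1
    apply Finset.sum_congr rfl
    intro j _
    simp [g, sq]
  calc ‖∑ j, z j • h j‖ ≤ (inner ℝ f g : ℝ) := h1.trans_eq h2
    _ ≤ ‖f‖ * ‖g‖ := h3
    _ = ‖z‖ * ‖h‖ := by rw [hf, hg]

/-- Let `X : H^d → H` be a row partial isometry and `L ⊆ H` a closed subspace,
co-invariant for the components of `X`, on which the column adjoint `X*` acts isometrically.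
Then for every `z ∈ 𝔹^d`, `L ⊆ Ran_z(X) = ran ((X - z) X*X)`. -/
theorem stmt_5 {d : ℕ} {H : Type*} [NormedAddCommGroup H] [InnerProductSpace ℂ H]
    [CompleteSpace H]
    (X : PiLp 2 (fun _ : Fin d => H) →L[ℂ] H)
    (hX : IsIdempotentElem (X ∘L (adjoint X)))
    (L : Submodule ℂ H) (hLc : IsClosed (L : Set H))
    (hcoinv : ∀ l ∈ L, ∀ k : Fin d, ((adjoint X) l) k ∈ L)
    (hiso : ∀ l ∈ L, ‖(adjoint X) l‖ = ‖l‖)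
    (z : EuclideanSpace ℂ (Fin d)) (hz : ‖z‖ < 1) :
    L ≤ LinearMap.range (((X - rowOp z) ∘L ((adjoint X) ∘L X) :
      PiLp 2 (fun _ : Fin d => H) →L[ℂ] H) : PiLp 2 (fun _ : Fin d => H) →ₗ[ℂ] H) := by

  -- P = X X* is idempotent
  have hPP : ∀ v : H, X (adjoint X (X (adjoint X v))) = X (adjoint X v) := by
    intro v
    have := congrArg (fun (T : H →L[ℂ] H) => T v) hX
    simpa using this
  -- X* X X* = X*
  have hXXX : ∀ v : H, adjoint X (X (adjoint X v)) = adjoint X v := by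
    intro v
    have key : adjoint X (v - X (adjoint X v)) = 0 := by
      have h0 : X (adjoint X (v - X (adjoint X v))) = 0 := by
        simp [map_sub, hPP v]
      have : (inner ℂ (adjoint X (v - X (adjoint X v))) (adjoint X (v - X (adjoint X v))) : ℂ) = 0 := by
        rw [adjoint_inner_left, h0, inner_zero_right]
      exact inner_self_eq_zero.mp this
    have := key
    rw [map_sub, sub_eq_zero] at this
    exact this.symm
  -- X X* l = l for l ∈ L
  have hfix : ∀ l ∈ L, X (adjoint X l) = l := by
    intro l hl
    have hnorm : (inner ℂ ((adjoint X) l) ((adjoint X) l) : ℂ) = inner ℂ l l := by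
      rw [inner_self_eq_norm_sq_to_K, inner_self_eq_norm_sq_to_K, hiso l hl]
    have hPll : (inner ℂ (X (adjoint X l)) l : ℂ) = inner ℂ l l := by
      rw [← adjoint_inner_right X ((adjoint X) l) l]; exact hnorm
    have hlPl : (inner ℂ l (X (adjoint X l)) : ℂ) = inner ℂ l l := by
      rw [← adjoint_inner_left X ((adjoint X) l) l]; exact hnorm
    have hPlPl : (inner ℂ (X (adjoint X l)) (X (adjoint X l)) : ℂ) = inner ℂ l l := by
      rw [← adjoint_inner_right X ((adjoint X) l) (X ((adjoint X) l)), hXXX l]; exact hnorm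
    have : (inner ℂ (X (adjoint X l) - l) (X (adjoint X l) - l) : ℂ) = 0 := by
      rw [inner_sub_left, inner_sub_right, inner_sub_right, hPlPl, hPll, hlPl]
      ring
    have := inner_self_eq_zero.mp this
    rw [sub_eq_zero] at this
    exact this
  -- the operator S = rowOp z ∘ X* maps L into L
  have hSmem : ∀ l ∈ L, rowOp z (adjoint X l) ∈ L := by
    intro l hl
    rw [rowOp_apply]
    exact Submodule.sum_mem _ fun j _ => Submodule.smul_mem _ _ (hcoinv l hl j)
  have : CompleteSpace L := hLc.completeSpace_coe
  -- S as an operator on L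
  let S : L →L[ℂ] L :=
    ContinuousLinearMap.codRestrict ((rowOp z ∘L adjoint X) ∘L L.subtypeL) L
      (fun x => hSmem x x.2)
  have hSnorm : ‖S‖ < 1 := by
    refine lt_of_le_of_lt (ContinuousLinearMap.opNorm_le_bound _ (norm_nonneg z) ?_) hz
    intro x
    have : ‖S x‖ = ‖rowOp z (adjoint X (x : H))‖ := rfl
    rw [this]
    calc ‖rowOp z (adjoint X (x : H))‖ ≤ ‖z‖ * ‖adjoint X (x : H)‖ :=
          rowOp_norm_apply_le z _
      _ = ‖z‖ * ‖x‖ := by rw [hiso _ x.2]; rfl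
  -- 1 - S invertible
  let u : (L →L[ℂ] L)ˣ := Units.oneSub S hSnorm
  intro l hl
  set g : L := (↑u⁻¹ : L →L[ℂ] L) ⟨l, hl⟩ with hg
  have hug : g - S g = ⟨l, hl⟩ := by
    have h1 : (u : L →L[ℂ] L) ((↑u⁻¹ : L →L[ℂ] L) ⟨l, hl⟩) = ⟨l, hl⟩ := by
      calc (u : L →L[ℂ] L) ((↑u⁻¹ : L →L[ℂ] L) ⟨l, hl⟩)
          = ((u : L →L[ℂ] L) * (↑u⁻¹ : L →L[ℂ] L)) ⟨l, hl⟩ := rfl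
        _ = (1 : L →L[ℂ] L) ⟨l, hl⟩ := by rw [u.mul_inv]
        _ = ⟨l, hl⟩ := rfl
    have h2 : (u : L →L[ℂ] L) = 1 - S := rfl
    rw [h2] at h1
    simpa [hg] using h1
  refine ⟨adjoint X (g : H), ?_⟩
  have hcalc : ((X - rowOp z) ∘L ((adjoint X) ∘L X)) (adjoint X (g : H))
      = (g : H) - rowOp z (adjoint X (g : H)) := by
    simp only [comp_apply, sub_apply]
    rw [hXXX (g : H), hfix (g : H) g.2]
  rw [ContinuousLinearMap.coe_coe, hcalc]
  have h3 := congrArg (Subtype.val : L → H) hug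
  exact h3


end
end

section
/- For any row contraction T on a Hilbert space H, the closed linear span over z ∈ 𝔹^d of the ranges of (I - Tz*)^{-1} equals the closed linear span over multi-indices n ∈ ℕ^d of the ranges of the symmetrized monomials T^n := Σ_{|α| words with letter count n} T^α. -/
open ContinuousLinearMap

set_option synthInstance.maxHeartbeats 1000000
set_option maxHeartbeats 1000000

noncomputable section

open scoped Classical in
/-- The symmetrized monomial `T^n = Σ_{α : words with letter count n} T^α` of a row contraction. -/
def symPow {d : ℕ} {H : Type*} [NormedAddCommGroup H] [InnerProductSpace ℂ H]
    [CompleteSpace H] (T : PiLp 2 (fun _ : Fin d => H) →L[ℂ] H) (n : Fin d → ℕ) :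
    H →L[ℂ] H :=
  ∑ w ∈ Finset.univ.filter
      (fun w : Fin (∑ k, n k) → Fin d => ∀ k, (List.ofFn w).count k = n k),
    (List.ofFn fun j => T ∘L colOp (EuclideanSpace.single (w j) (1 : ℂ))).prod

/-! ### Auxiliary material -/

section Aux

set_option linter.unusedVariables false
set_option linter.unusedSectionVars false

section Lists

variable {d : ℕ}

lemma list_sum_map_count {M : Type*} [AddCommMonoid M] (f : Fin d → M) (l : List (Fin d)) :
    (l.map f).sum = ∑ c, l.count c • f c := by
  induction l with
  | nil => simp
  | cons a l ih =>
      simp only [List.map_cons, List.sum_cons, ih, List.count_cons, beq_iff_eq]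
      rw [Finset.sum_congr rfl (fun c _ => add_smul (l.count c) (if a = c then 1 else 0) (f c))]
      rw [Finset.sum_add_distrib]
      rw [add_comm]
      congr 1
      rw [Finset.sum_eq_single a] <;> simp +contextual [eq_comm]

lemma list_prod_map_count {M : Type*} [CommMonoid M] (f : Fin d → M) (l : List (Fin d)) :
    (l.map f).prod = ∏ c, f c ^ l.count c := by
  induction l with
  | nil => simp
  | cons a l ih =>
      simp only [List.map_cons, List.prod_cons, ih, List.count_cons, beq_iff_eq]
      rw [Finset.prod_congr rfl (fun c _ => pow_add (f c) (l.count c) (if a = c then 1 else 0))]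
      rw [Finset.prod_mul_distrib]
      rw [mul_comm]
      congr 1
      rw [Finset.prod_eq_single a] <;> simp +contextual [eq_comm]

lemma sum_count_eq {k : ℕ} (w : Fin k → Fin d) :
    ∑ c, (List.ofFn w).count c = k := by
  have := list_sum_map_count (fun _ => (1:ℕ)) (List.ofFn w)
  simp only [smul_eq_mul, mul_one] at this
  rw [← this]
  simp [List.sum_ofFn]

end Lists

section ColOp

variable {d : ℕ} {H : Type*} [NormedAddCommGroup H] [InnerProductSpace ℂ H]

lemma colOp_apply (z : EuclideanSpace ℂ (Fin d)) (x : H) (c : Fin d) :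
    colOp z x c = (starRingEnd ℂ (z c)) • x := rfl

lemma norm_colOp_apply (z : EuclideanSpace ℂ (Fin d)) (x : H) :
    ‖colOp z x‖ = ‖z‖ * ‖x‖ := by
  rw [PiLp.norm_eq_of_L2, EuclideanSpace.norm_eq]
  rw [← Real.sqrt_sq (norm_nonneg x), ← Real.sqrt_mul (by positivity)]
  congr 1
  rw [Finset.sum_mul]
  refine Finset.sum_congr rfl fun c _ => ?_
  rw [colOp_apply, norm_smul]
  rw [mul_pow]
  congr 2
  simp

lemma norm_colOp_comp_le (T : PiLp 2 (fun _ : Fin d => H) →L[ℂ] H) (hT : ‖T‖ ≤ 1)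
    [CompleteSpace H] (z : EuclideanSpace ℂ (Fin d)) :
    ‖T ∘L colOp z‖ ≤ ‖z‖ := by
  refine opNorm_le_bound _ (norm_nonneg z) fun x => ?_
  calc ‖T (colOp z x)‖ ≤ ‖T‖ * ‖colOp z x‖ := le_opNorm _ _
    _ ≤ 1 * (‖z‖ * ‖x‖) := by
        rw [norm_colOp_apply]
        exact mul_le_mul hT le_rfl (by positivity) zero_le_one
    _ = ‖z‖ * ‖x‖ := one_mul _

lemma colOp_expand (z : EuclideanSpace ℂ (Fin d)) (x : H) :
    colOp z x = ∑ j, (starRingEnd ℂ (z j)) • colOp (EuclideanSpace.single j (1:ℂ)) x := by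
  ext c
  have : (∑ j, (starRingEnd ℂ (z j)) • colOp (EuclideanSpace.single j (1:ℂ)) x) c
      = ∑ j, (starRingEnd ℂ (z j)) • (colOp (EuclideanSpace.single j (1:ℂ)) x c) := by
    simp only [WithLp.ofLp_sum, WithLp.ofLp_smul, Finset.sum_apply, Pi.smul_apply]
  rw [this]
  simp only [colOp_apply]
  rw [Finset.sum_eq_single c]
  · simp [EuclideanSpace.single_apply]
  · intro b _ hb
    simp [EuclideanSpace.single_apply, Ne.symm hb]
  · simp

end ColOp

section WordOp

variable {d : ℕ} {H : Type*} [NormedAddCommGroup H] [InnerProductSpace ℂ H] [CompleteSpace H]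

def wordOp (T : PiLp 2 (fun _ : Fin d => H) →L[ℂ] H) {k : ℕ} (w : Fin k → Fin d) :
    H →L[ℂ] H :=
  (List.ofFn fun j => T ∘L colOp (EuclideanSpace.single (w j) (1 : ℂ))).prod

lemma A_apply (T : PiLp 2 (fun _ : Fin d => H) →L[ℂ] H) (z : EuclideanSpace ℂ (Fin d))
    (x : H) : (T ∘L colOp z) x
      = ∑ j, (starRingEnd ℂ (z j)) • ((T ∘L colOp (EuclideanSpace.single j (1:ℂ))) x) := by
  simp only [comp_apply]
  rw [colOp_expand z x, map_sum]
  exact Finset.sum_congr rfl fun j _ => by rw [map_smul]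

lemma wordOp_cons (T : PiLp 2 (fun _ : Fin d => H) →L[ℂ] H) {k : ℕ} (j : Fin d)
    (w : Fin k → Fin d) (x : H) :
    wordOp T (Fin.cons j w) x = (T ∘L colOp (EuclideanSpace.single j (1:ℂ))) (wordOp T w x) := by
  unfold wordOp
  rw [List.ofFn_succ]
  simp only [Fin.cons_zero, Fin.cons_succ, List.prod_cons, ContinuousLinearMap.mul_apply]

lemma wpow_apply (T : PiLp 2 (fun _ : Fin d => H) →L[ℂ] H) (z : EuclideanSpace ℂ (Fin d))
    (k : ℕ) (x : H) :
    ((T ∘L colOp z) ^ k) x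
      = ∑ w : Fin k → Fin d, (∏ i, starRingEnd ℂ (z (w i))) • wordOp T w x := by
  induction k with
  | zero =>
      simp [wordOp]
  | succ k ih =>
      rw [pow_succ', ContinuousLinearMap.mul_apply, ih, map_sum]
      rw [← Equiv.sum_comp (Fin.consEquiv (fun _ : Fin (k+1) => Fin d))
        (fun v => (∏ i, starRingEnd ℂ (z (v i))) • wordOp T v x)]
      rw [Fintype.sum_prod_type]
      have lhs_eq : ∀ w : Fin k → Fin d,
          (T ∘L colOp z) ((∏ i, starRingEnd ℂ (z (w i))) • wordOp T w x)
          = ∑ j, (∏ i, starRingEnd ℂ (z (w i))) • starRingEnd ℂ (z j) •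
              ((T ∘L colOp (EuclideanSpace.single j (1:ℂ))) (wordOp T w x)) := by
        intro w
        rw [map_smul, A_apply T z (wordOp T w x), Finset.smul_sum]
      simp only [lhs_eq]
      rw [Finset.sum_comm]
      refine Finset.sum_congr rfl fun j _ => Finset.sum_congr rfl fun w _ => ?_
      have h1 : (Fin.consEquiv (fun _ : Fin (k+1) => Fin d)) (j, w) = Fin.cons j w := rfl
      rw [h1, wordOp_cons, Fin.prod_univ_succ, mul_smul, smul_comm]
      rfl

lemma norm_wordOp_le (T : PiLp 2 (fun _ : Fin d => H) →L[ℂ] H) (hT : ‖T‖ ≤ 1) {k : ℕ}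
    (w : Fin k → Fin d) : ‖wordOp T w‖ ≤ 1 := by
  unfold wordOp
  induction k with
  | zero =>
      simp only [List.ofFn_zero, List.prod_nil]; exact ContinuousLinearMap.norm_id_le
  | succ k ih =>
      rw [List.ofFn_succ, List.prod_cons]
      calc ‖_ * _‖ ≤ ‖T ∘L colOp (EuclideanSpace.single (w 0) (1:ℂ))‖
            * ‖(List.ofFn fun j => T ∘L colOp (EuclideanSpace.single (w j.succ) (1:ℂ))).prod‖ :=
            norm_mul_le _ _
        _ ≤ 1 * 1 := by
            refine mul_le_mul ?_ (ih _) (norm_nonneg _) zero_le_one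
            calc ‖T ∘L colOp (EuclideanSpace.single (w 0) (1:ℂ))‖
                ≤ ‖EuclideanSpace.single (w 0) (1:ℂ)‖ := norm_colOp_comp_le T hT _
              _ ≤ 1 := by rw [EuclideanSpace.norm_single]; simp
        _ = 1 := one_mul 1

open scoped Classical in
lemma symPow_eq (T : PiLp 2 (fun _ : Fin d => H) →L[ℂ] H) (n : Fin d → ℕ) (k : ℕ)
    (h : k = ∑ c, n c) :
    symPow T n = ∑ w ∈ Finset.univ.filter
      (fun w : Fin k → Fin d => ∀ c, (List.ofFn w).count c = n c), wordOp T w := by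
  subst h
  rfl

lemma coeff_eq (z : EuclideanSpace ℂ (Fin d)) {k : ℕ} (w : Fin k → Fin d) :
    (∏ i, starRingEnd ℂ (z (w i)))
      = ∏ c, (starRingEnd ℂ (z c)) ^ ((List.ofFn w).count c) := by
  rw [← list_prod_map_count (fun c => starRingEnd ℂ (z c)) (List.ofFn w)]
  rw [List.map_ofFn, List.prod_ofFn]
  rfl

open scoped Classical in
lemma pow_apply_mem (T : PiLp 2 (fun _ : Fin d => H) →L[ℂ] H) (z : EuclideanSpace ℂ (Fin d))
    (k : ℕ) (S : Submodule ℂ H) {x : H} (hx : x ∈ S) :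
    ((T ∘L colOp z) ^ k) x ∈ ⨆ n : Fin d → ℕ, Submodule.map ((symPow T n : H →L[ℂ] H) : H →ₗ[ℂ] H) S := by
  rw [wpow_apply]
  set g : (Fin k → Fin d) → (Fin d → ℕ) := fun w c => (List.ofFn w).count c with hg
  rw [← Finset.sum_fiberwise_of_maps_to (g := g) (t := Finset.image g Finset.univ)
    (fun w _ => Finset.mem_image_of_mem g (Finset.mem_univ w))]
  refine Submodule.sum_mem _ fun m hm => ?_
  have hfib : ∀ w ∈ Finset.univ.filter (fun w => g w = m),
      (∏ i, starRingEnd ℂ (z (w i))) • wordOp T w x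
        = wordOp T w ((∏ c, (starRingEnd ℂ (z c)) ^ (m c)) • x) := by
    intro w hw
    rw [Finset.mem_filter] at hw
    rw [coeff_eq, map_smul, ← hw.2]
  rw [Finset.sum_congr rfl hfib]
  obtain ⟨w₀, -, hw₀⟩ := Finset.mem_image.mp hm
  have hk : k = ∑ c, m c := by rw [← hw₀]; exact (sum_count_eq w₀).symm
  have : (∑ w ∈ Finset.univ.filter (fun w => g w = m),
      wordOp T w ((∏ c, (starRingEnd ℂ (z c)) ^ (m c)) • x))
      = symPow T m ((∏ c, (starRingEnd ℂ (z c)) ^ (m c)) • x) := by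
    rw [symPow_eq T m k hk]
    rw [ContinuousLinearMap.sum_apply]
    refine Finset.sum_congr ?_ fun _ _ => rfl
    apply Finset.filter_congr
    intro w _
    simp only [hg, funext_iff]
  rw [this]
  exact Submodule.mem_iSup_of_mem m (Submodule.mem_map_of_mem (S.smul_mem _ hx))

end WordOp

section Zeta

def zeta (N : ℕ) : ℂ := Complex.exp (2 * Real.pi * Complex.I / N)

variable {N : ℕ}

lemma zeta_ne_zero : zeta N ≠ 0 := Complex.exp_ne_zero _

lemma conj_zeta : (starRingEnd ℂ) (zeta N) = (zeta N)⁻¹ := by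
  rw [zeta, ← Complex.exp_conj, ← Complex.exp_neg]
  congr 1
  simp [map_div₀, Complex.conj_I, map_ofNat]
  ring

lemma zeta_prim (hN : 0 < N) : IsPrimitiveRoot (zeta N) N :=
  Complex.isPrimitiveRoot_exp N hN.ne'

lemma norm_zeta (N : ℕ) : ‖zeta N‖ = 1 := by
  rw [zeta, Complex.norm_exp]
  have : (2 * Real.pi * Complex.I / N).re = 0 := by
    simp [Complex.div_re]
  rw [this, Real.exp_zero]

lemma ortho (hN : 0 < N) (a : ℤ) :
    ∑ t : Fin N, (zeta N) ^ ((t : ℤ) * a) = if (N:ℤ) ∣ a then (N:ℂ) else 0 := by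
  have hu : ∀ t : Fin N, (zeta N) ^ ((t : ℤ) * a) = ((zeta N) ^ a) ^ (t : ℕ) := by
    intro t
    rw [mul_comm, zpow_mul, ← zpow_natCast ((zeta N)^a)]
  simp only [hu]
  rw [Fin.sum_univ_eq_sum_range (fun i => ((zeta N)^a)^i)]
  by_cases h : (N:ℤ) ∣ a
  · rw [if_pos h]
    have : (zeta N) ^ a = 1 := ((zeta_prim hN).zpow_eq_one_iff_dvd a).mpr h
    simp [this]
  · rw [if_neg h]
    have hne : (zeta N) ^ a ≠ 1 := fun hcon => h (((zeta_prim hN).zpow_eq_one_iff_dvd a).mp hcon)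
    rw [geom_sum_eq hne]
    have : ((zeta N) ^ a) ^ N = 1 := by
      rw [← zpow_natCast ((zeta N)^a), ← zpow_mul, mul_comm, zpow_mul,
        zpow_natCast, (zeta_prim hN).pow_eq_one, one_zpow]
    rw [this]
    simp

lemma char_sum {d : ℕ} (hN : 0 < N) (n cnt : Fin d → ℕ) :
    ∑ j : Fin d → Fin N, ∏ c, (zeta N) ^ (((j c : ℤ)) * ((n c : ℤ) - (cnt c : ℤ)))
      = if (∀ c, cnt c % N = n c % N) then ((N:ℂ))^d else 0 := by
  rw [← Fintype.piFinset_univ,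
    ← Finset.prod_univ_sum (fun _ : Fin d => (Finset.univ : Finset (Fin N)))
      (fun c t => (zeta N) ^ (((t : ℕ) : ℤ) * ((n c : ℤ) - (cnt c : ℤ))))]
  by_cases h : ∀ c, cnt c % N = n c % N
  · rw [if_pos h]
    rw [Finset.prod_congr rfl fun c _ => ortho hN ((n c : ℤ) - (cnt c : ℤ))]
    have : ∀ c : Fin d, (N:ℤ) ∣ ((n c : ℤ) - (cnt c : ℤ)) := by
      intro c
      exact_mod_cast (Nat.modEq_iff_dvd.mp (h c))
    rw [Finset.prod_congr rfl fun c _ => if_pos (this c)]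
    simp
  · rw [if_neg h]
    push_neg at h
    obtain ⟨c₀, hc₀⟩ := h
    refine Finset.prod_eq_zero (Finset.mem_univ c₀) ?_
    rw [ortho hN, if_neg]
    intro hdvd
    exact hc₀ (Nat.modEq_iff_dvd.mpr (by exact_mod_cast hdvd))

end Zeta

section Grid

/-- the grid point `z_{r,j}` -/
def zr (N : ℕ) {d : ℕ} (r : ℝ) (j : Fin d → Fin N) : EuclideanSpace ℂ (Fin d) :=
  WithLp.toLp 2 (fun c => (r : ℂ) * (zeta N) ^ ((j c : ℕ)))

open scoped Classical in
def modFilter (d N : ℕ) (n : Fin d → ℕ) (k : ℕ) : Finset (Fin k → Fin d) :=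
  Finset.univ.filter (fun w => ∀ c, (List.ofFn w).count c % N = n c % N)

lemma norm_zr_le {N d : ℕ} {r : ℝ} (hr : 0 ≤ r) (j : Fin d → Fin N) :
    ‖zr N r j‖ ≤ r * (d + 1) := by
  rw [EuclideanSpace.norm_eq]
  have hterm : ∀ c : Fin d, ‖zr N r j c‖ = r := by
    intro c
    rw [zr, PiLp.toLp_apply]
    rw [norm_mul, norm_pow, norm_zeta, one_pow, mul_one, Complex.norm_real,
      Real.norm_of_nonneg hr]
  have : ∑ c : Fin d, ‖zr N r j c‖ ^ 2 = d * r ^ 2 := by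
    rw [Finset.sum_congr rfl fun c _ => by rw [hterm c]]
    simp [Finset.sum_const, Finset.card_univ]
  rw [this]
  have h1 : (d : ℝ) * r ^ 2 ≤ (r * (d + 1)) ^ 2 := by nlinarith [sq_nonneg r]
  calc Real.sqrt ((d : ℝ) * r ^ 2) ≤ Real.sqrt ((r * (d + 1)) ^ 2) := Real.sqrt_le_sqrt h1
    _ = r * (d + 1) := Real.sqrt_sq (by positivity)

variable {d N k : ℕ} {n : Fin d → ℕ}

lemma mem_modFilter_struct (hNgt : ∀ c, n c < N) {w : Fin k → Fin d}
    (hw : w ∈ modFilter d N n k) :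
    (∀ c, n c ≤ (List.ofFn w).count c) ∧ ∃ m, k = (∑ c, n c) + N * m := by
  classical
  rw [modFilter, Finset.mem_filter] at hw
  have hmod := hw.2
  have hge : ∀ c, n c ≤ (List.ofFn w).count c := by
    intro c
    have h1 : (List.ofFn w).count c % N = n c := by
      rw [hmod c, Nat.mod_eq_of_lt (hNgt c)]
    calc n c = (List.ofFn w).count c % N := h1.symm
      _ ≤ (List.ofFn w).count c := Nat.mod_le _ _
  refine ⟨hge, ?_⟩
  have hdvd : ∀ c, N ∣ ((List.ofFn w).count c - n c) := by
    intro c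
    have h1 : (List.ofFn w).count c % N = n c := by
      rw [hmod c, Nat.mod_eq_of_lt (hNgt c)]
    have h2 : (List.ofFn w).count c = N * ((List.ofFn w).count c / N) + n c := by
      conv_lhs => rw [← Nat.div_add_mod ((List.ofFn w).count c) N]
      rw [h1]
    exact ⟨(List.ofFn w).count c / N, by omega⟩
  have hsum : k = (∑ c, n c) + ∑ c, ((List.ofFn w).count c - n c) := by
    rw [← Finset.sum_add_distrib]
    calc k = ∑ c, (List.ofFn w).count c := (sum_count_eq w).symm
      _ = ∑ c, (n c + ((List.ofFn w).count c - n c)) :=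
          Finset.sum_congr rfl fun c _ => by have := hge c; omega
  obtain ⟨m, hm⟩ := Finset.dvd_sum (fun c (_ : c ∈ Finset.univ) => hdvd c)
  exact ⟨m, by rw [hsum, hm]⟩

lemma modFilter_empty (hNgt : ∀ c, n c < N) (hk1 : k ≠ ∑ c, n c)
    (hk2 : k < (∑ c, n c) + N) : modFilter d N n k = ∅ := by
  rw [Finset.eq_empty_iff_forall_notMem]
  intro w hw
  obtain ⟨-, m, hm⟩ := mem_modFilter_struct hNgt hw
  rcases Nat.eq_zero_or_pos m with h | h
  · rw [h, Nat.mul_zero, Nat.add_zero] at hm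
    exact hk1 hm
  · obtain ⟨m', rfl⟩ : ∃ m', m = m' + 1 := ⟨m - 1, by omega⟩
    rw [Nat.mul_add, Nat.mul_one] at hm
    omega

open scoped Classical in
lemma modFilter_at_deg (hNgt : ∀ c, n c < N) (hk : k = ∑ c, n c) :
    modFilter d N n k
      = Finset.univ.filter (fun w : Fin k → Fin d => ∀ c, (List.ofFn w).count c = n c) := by
  classical
  ext w
  rw [modFilter, Finset.mem_filter, Finset.mem_filter]
  constructor
  · rintro ⟨-, hmod⟩
    refine ⟨Finset.mem_univ w, ?_⟩
    have hmem : w ∈ modFilter d N n k := by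
      rw [modFilter, Finset.mem_filter]
      exact ⟨Finset.mem_univ w, hmod⟩
    have hge := (mem_modFilter_struct hNgt hmem).1
    have hsum : ∑ c, n c = ∑ c, (List.ofFn w).count c := by rw [sum_count_eq w, hk]
    have := (Finset.sum_eq_sum_iff_of_le (fun c _ => hge c)).mp hsum
    intro c
    exact (this c (Finset.mem_univ c)).symm
  · rintro ⟨-, hcnt⟩
    exact ⟨Finset.mem_univ w, fun c => by rw [hcnt c]⟩

lemma modFilter_card_le : (modFilter d N n k).card ≤ d ^ k := by
  calc (modFilter d N n k).card ≤ (Finset.univ : Finset (Fin k → Fin d)).card :=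
        Finset.card_le_card (Finset.filter_subset _ _)
    _ = d ^ k := by rw [Finset.card_univ, Fintype.card_fun] ; simp

end Grid

section Key

variable {d : ℕ} {H : Type*} [NormedAddCommGroup H] [InnerProductSpace ℂ H] [CompleteSpace H]

lemma zeta_mul_inv_pow {N : ℕ} (t nc cc : ℕ) :
    (zeta N) ^ (t * nc) * ((zeta N) ^ (cc * t))⁻¹
      = (zeta N) ^ ((t : ℤ) * ((nc : ℤ) - (cc : ℤ))) := by
  rw [← zpow_natCast (zeta N) (t * nc), ← zpow_natCast (zeta N) (cc * t), ← zpow_neg,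
    ← zpow_add₀ zeta_ne_zero]
  congr 1
  push_cast
  ring

lemma conj_coeff {N : ℕ} (hN : 0 < N) (r : ℝ) (j : Fin d → Fin N) {k : ℕ}
    (w : Fin k → Fin d) :
    (∏ i, starRingEnd ℂ ((zr N r j) (w i)))
      = (r:ℂ)^k * ((zeta N) ^ (∑ c, (List.ofFn w).count c * (j c : ℕ)))⁻¹ := by
  have h1 : ∀ i : Fin k, starRingEnd ℂ ((zr N r j) (w i))
      = (r:ℂ) * ((zeta N) ^ ((j (w i) : ℕ)))⁻¹ := by
    intro i
    rw [zr, PiLp.toLp_apply]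
    rw [map_mul, Complex.conj_ofReal, map_pow, conj_zeta, inv_pow]
  rw [Finset.prod_congr rfl fun i _ => h1 i]
  rw [Finset.prod_mul_distrib, Finset.prod_const, Finset.card_univ, Fintype.card_fin]
  congr 1
  simp only [← inv_pow]
  rw [Finset.prod_pow_eq_pow_sum]
  congr 1
  have := list_sum_map_count (fun c => (j c : ℕ)) (List.ofFn w)
  rw [List.map_ofFn, List.sum_ofFn] at this
  simp only [smul_eq_mul, Function.comp] at this
  exact this

lemma key_identity {N : ℕ} (hN : 0 < N) (T : PiLp 2 (fun _ : Fin d => H) →L[ℂ] H)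
    (n : Fin d → ℕ) (r : ℝ) (k : ℕ) (x : H) :
    ∑ j : Fin d → Fin N, (∏ c, (zeta N) ^ ((j c : ℕ) * n c)) • ((T ∘L colOp (zr N r j)) ^ k) x
      = (((N:ℂ))^d * (r:ℂ)^k) • ∑ w ∈ modFilter d N n k, wordOp T w x := by
  have step1 : ∀ j : Fin d → Fin N,
      (∏ c, (zeta N) ^ ((j c : ℕ) * n c)) • ((T ∘L colOp (zr N r j)) ^ k) x
      = ∑ w : Fin k → Fin d,
          ((∏ c, (zeta N) ^ ((j c : ℕ) * n c)) * ∏ i, starRingEnd ℂ ((zr N r j) (w i)))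
            • wordOp T w x := by
    intro j
    rw [wpow_apply, Finset.smul_sum]
    exact Finset.sum_congr rfl fun w _ => by rw [smul_smul]
  rw [Finset.sum_congr rfl fun j _ => step1 j]
  rw [Finset.sum_comm]
  have step2 : ∀ w : Fin k → Fin d,
      ∑ j : Fin d → Fin N,
        ((∏ c, (zeta N) ^ ((j c : ℕ) * n c)) * ∏ i, starRingEnd ℂ ((zr N r j) (w i)))
          • wordOp T w x
      = ((r:ℂ)^k * if (∀ c, (List.ofFn w).count c % N = n c % N) then ((N:ℂ))^d else 0)
          • wordOp T w x := by
    intro w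
    rw [← Finset.sum_smul]
    congr 1
    have hco : ∀ j : Fin d → Fin N,
        (∏ c, (zeta N) ^ ((j c : ℕ) * n c)) * ∏ i, starRingEnd ℂ ((zr N r j) (w i))
        = (r:ℂ)^k * ∏ c, (zeta N) ^ (((j c : ℤ)) * ((n c : ℤ) - ((List.ofFn w).count c : ℤ))) := by
      intro j
      rw [conj_coeff hN]
      rw [← Finset.prod_pow_eq_pow_sum, ← Finset.prod_inv_distrib]
      have hc : (∏ c, (zeta N) ^ ((j c : ℕ) * n c))
          * (∏ c, ((zeta N) ^ ((List.ofFn w).count c * (j c : ℕ)))⁻¹)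
          = ∏ c, (zeta N) ^ (((j c : ℤ)) * ((n c : ℤ) - ((List.ofFn w).count c : ℤ))) := by
        rw [← Finset.prod_mul_distrib]
        exact Finset.prod_congr rfl fun c _ => zeta_mul_inv_pow _ _ _
      rw [← hc]
      ring
    rw [Finset.sum_congr rfl fun j _ => hco j]
    rw [← Finset.mul_sum]
    rw [char_sum hN]
  rw [Finset.sum_congr rfl fun w _ => step2 w]
  classical
  rw [Finset.smul_sum]
  rw [modFilter]
  rw [Finset.sum_filter]
  refine Finset.sum_congr rfl fun w _ => ?_
  by_cases hw : ∀ c, (List.ofFn w).count c % N = n c % N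
  · rw [if_pos hw, if_pos hw, mul_comm]
  · rw [if_neg hw, if_neg hw, mul_zero, zero_smul]

end Key

lemma arith_bound {d s k : ℕ} {r X : ℝ} (hr : 0 < r) (hr2 : r * (d+1) ≤ 1/2)
    (hk : s + 1 ≤ k) (hX : 0 ≤ X) :
    r^(k-s) * ((d:ℝ)^k * X) ≤ ((X * d^s * (d+1) * 2^(s+1)) * r) * (1/2:ℝ)^k := by
  obtain ⟨m, rfl⟩ : ∃ m, k = s + (m + 1) := ⟨k - s - 1, by omega⟩
  have h0 : (0:ℝ) ≤ d := Nat.cast_nonneg d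
  have hrd : 0 ≤ r * d := by positivity
  have hrd2 : r * d ≤ 1/2 := le_trans (by nlinarith) hr2
  have key : (r * d)^(m+1) ≤ (1/2:ℝ)^m * (r * (d+1)) := by
    calc (r*d)^(m+1) = (r*d)^m * (r*d) := pow_succ _ _
      _ ≤ (1/2:ℝ)^m * (r*(d+1)) :=
          mul_le_mul (pow_le_pow_left₀ hrd hrd2 m) (by nlinarith) hrd (by positivity)
  have hks : s + (m+1) - s = m + 1 := by omega
  rw [hks]
  have expand : r^(m+1) * ((d:ℝ)^(s + (m+1)) * X) = X * (d:ℝ)^s * ((r*d)^(m+1)) := by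
    rw [pow_add, mul_pow]
    ring
  rw [expand]
  have h2 : (1/2:ℝ)^(s+(m+1)) * 2^(s+1) = (1/2:ℝ)^m := by
    have hsm : s + (m+1) = m + (s+1) := by omega
    rw [hsm, pow_add, mul_assoc, ← mul_pow]
    norm_num
  calc X * (d:ℝ)^s * ((r*d)^(m+1)) ≤ X * (d:ℝ)^s * ((1/2:ℝ)^m * (r*(d+1))) :=
        mul_le_mul_of_nonneg_left key (by positivity)
    _ = ((X * d^s * (d+1) * 2^(s+1)) * r) * (1/2:ℝ)^(s+(m+1)) := by
        rw [← h2]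
        ring

section Approx

variable {d : ℕ} {H : Type*} [NormedAddCommGroup H] [InnerProductSpace ℂ H] [CompleteSpace H]

lemma approx_step (T : PiLp 2 (fun _ : Fin d => H) →L[ℂ] H) (hT : ‖T‖ ≤ 1)
    (S : Submodule ℂ H) (n : Fin d → ℕ) {x : H} (hx : x ∈ S) {r : ℝ} (hr : 0 < r)
    (hr2 : r * (d + 1) ≤ 1/2) :
    ∃ u ∈ (⨆ z : {z : EuclideanSpace ℂ (Fin d) // ‖z‖ < 1},
        Submodule.map ((Ring.inverse (1 - T ∘L colOp z.1) : H →L[ℂ] H) : H →ₗ[ℂ] H) S),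
      ‖u - symPow T n x‖ ≤ (2 * (‖x‖ * d^(∑ c, n c) * (d+1) * 2^((∑ c, n c)+1))) * r := by
  classical
  set s := ∑ c, n c with hs
  set N := s + 1 with hNdef
  have hN : 0 < N := Nat.succ_pos s
  have hNgt : ∀ c, n c < N := by
    intro c
    have : n c ≤ s := Finset.single_le_sum (fun c _ => Nat.zero_le (n c)) (Finset.mem_univ c)
    omega
  set U := (⨆ z : {z : EuclideanSpace ℂ (Fin d) // ‖z‖ < 1},
      Submodule.map ((Ring.inverse (1 - T ∘L colOp z.1) : H →L[ℂ] H) : H →ₗ[ℂ] H) S) with hU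
  have hzlt : ∀ j : Fin d → Fin N, ‖zr N r j‖ < 1 := by
    intro j
    calc ‖zr N r j‖ ≤ r * (d + 1) := norm_zr_le hr.le j
      _ ≤ 1/2 := hr2
      _ < 1 := by norm_num
  have hA : ∀ j : Fin d → Fin N, ‖T ∘L colOp (zr N r j)‖ < 1 := fun j =>
    lt_of_le_of_lt (norm_colOp_comp_le T hT _) (hzlt j)
  have hinv : ∀ j : Fin d → Fin N,
      HasSum (fun k => ((T ∘L colOp (zr N r j)) ^ k) x)
        ((Ring.inverse (1 - T ∘L colOp (zr N r j)) : H →L[ℂ] H) x) := by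
    intro j
    exact (hasSum_geom_series_inverse _ (hA j)).mapL (ContinuousLinearMap.apply ℂ H x)
  set cN : ℂ := (((N:ℕ):ℂ)^d * ((r:ℝ):ℂ)^s)⁻¹ with hcN
  set ω : (Fin d → Fin N) → ℂ := fun j => ∏ c, (zeta N) ^ ((j c : ℕ) * n c) with hω
  set u := cN • ∑ j : Fin d → Fin N, ω j •
      ((Ring.inverse (1 - T ∘L colOp (zr N r j)) : H →L[ℂ] H) x) with hu
  have hu_mem : u ∈ U := by
    refine Submodule.smul_mem _ _ (Submodule.sum_mem _ fun j _ => Submodule.smul_mem _ _ ?_)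
    refine Submodule.mem_iSup_of_mem ⟨zr N r j, hzlt j⟩ ?_
    exact Submodule.mem_map_of_mem hx
  set Wk : ℕ → H := fun k => ∑ w ∈ modFilter d N n k, wordOp T w x with hWk
  have hsum1 : HasSum (fun k : ℕ => cN • ∑ j : Fin d → Fin N,
      ω j • (((T ∘L colOp (zr N r j)) ^ k) x)) u := by
    refine HasSum.const_smul cN ?_
    exact hasSum_sum fun j _ => (hinv j).const_smul (ω j)
  have hNne : (((N:ℕ):ℂ))^d ≠ 0 := by
    apply pow_ne_zero
    exact Nat.cast_ne_zero.mpr hN.ne'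
  have hrne : ((r:ℝ):ℂ) ≠ 0 := by exact_mod_cast Complex.ofReal_ne_zero.mpr hr.ne'
  have hsum2 : HasSum (fun k : ℕ => (cN * (((N:ℕ):ℂ)^d * ((r:ℝ):ℂ)^k)) • Wk k) u := by
    have hfun : (fun k : ℕ => cN • ∑ j : Fin d → Fin N,
        ω j • (((T ∘L colOp (zr N r j)) ^ k) x))
        = fun k : ℕ => (cN * (((N:ℕ):ℂ)^d * ((r:ℝ):ℂ)^k)) • Wk k := by
      funext k
      rw [hω, hWk]
      rw [key_identity hN T n r k x, smul_smul]
    rw [← hfun]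
    exact hsum1
  have hWs : Wk s = symPow T n x := by
    rw [hWk]
    simp only []
    rw [modFilter_at_deg hNgt hs, symPow_eq T n s hs, ContinuousLinearMap.sum_apply]
  have hcoeff1 : cN * (((N:ℕ):ℂ)^d * ((r:ℝ):ℂ)^s) = 1 :=
    inv_mul_cancel₀ (mul_ne_zero hNne (pow_ne_zero s hrne))
  have hg : HasSum (fun k : ℕ => if k = s then symPow T n x else 0) (symPow T n x) :=
    hasSum_ite_eq s _
  set f : ℕ → H := fun k => (cN * (((N:ℕ):ℂ)^d * ((r:ℝ):ℂ)^k)) • Wk k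
      - (if k = s then symPow T n x else 0) with hf
  have hdiff : HasSum f (u - symPow T n x) := hsum2.sub hg
  set C : ℝ := ‖x‖ * d^s * (d+1) * 2^(s+1) with hC
  have hCnn : 0 ≤ C := by positivity
  have hb : ∀ k, ‖f k‖ ≤ (C * r) * (1/2:ℝ)^k := by
    intro k
    rcases eq_or_ne k s with hk | hk
    · subst hk
      have hfs : f s = 0 := by
        rw [hf]
        simp only [hcoeff1, one_smul, hWs]
        simp
      rw [hfs, norm_zero]
      positivity
    · by_cases hklt : k < s + N
      · have hempty : modFilter d N n k = ∅ := modFilter_empty hNgt (by rw [← hs]; exact hk) hklt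
        rw [hf]
        simp only [if_neg hk]
        have hW0 : Wk k = 0 := by rw [hWk]; simp [hempty]
        rw [hW0, smul_zero, zero_sub, norm_neg, norm_zero]
        positivity
      · push_neg at hklt
        rw [hf]
        simp only [if_neg hk]
        rw [sub_zero, norm_smul]
        have hsplit : ((r:ℝ):ℂ)^k = ((r:ℝ):ℂ)^s * ((r:ℝ):ℂ)^(k-s) := by
          rw [← pow_add]
          congr 1
          omega
        have hco : cN * (((N:ℕ):ℂ)^d * ((r:ℝ):ℂ)^k) = ((r:ℝ):ℂ)^(k-s) := by
          rw [hsplit, hcN]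
          field_simp
        rw [hco]
        have h1 : ‖((r:ℝ):ℂ)^(k-s)‖ = r^(k-s) := by
          rw [norm_pow, Complex.norm_real, Real.norm_of_nonneg hr.le]
        rw [h1]
        have h2 : ‖Wk k‖ ≤ (d:ℝ)^k * ‖x‖ := by
          rw [hWk]
          calc ‖∑ w ∈ modFilter d N n k, wordOp T w x‖
              ≤ ∑ w ∈ modFilter d N n k, ‖wordOp T w x‖ := norm_sum_le _ _
            _ ≤ ∑ w ∈ modFilter d N n k, ‖x‖ := by
                refine Finset.sum_le_sum fun w _ => ((wordOp T w).le_opNorm x).trans ?_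
                have hWle := norm_wordOp_le T hT w
                nlinarith [norm_nonneg x]
            _ = (modFilter d N n k).card • ‖x‖ := by rw [Finset.sum_const]
            _ ≤ (d^k : ℕ) • ‖x‖ := nsmul_le_nsmul_left (norm_nonneg x) modFilter_card_le
            _ = (d:ℝ)^k * ‖x‖ := by rw [nsmul_eq_mul]; push_cast; ring
        calc r^(k-s) * ‖Wk k‖ ≤ r^(k-s) * ((d:ℝ)^k * ‖x‖) :=
              mul_le_mul_of_nonneg_left h2 (by positivity)
          _ ≤ (C * r) * (1/2:ℝ)^k := by
              rw [hC]
              exact arith_bound hr hr2 (by omega) (norm_nonneg x)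
  have hsummable_geom : Summable (fun k : ℕ => (C * r) * (1/2:ℝ)^k) :=
    (summable_geometric_of_lt_one (by norm_num) (by norm_num)).mul_left (C * r)
  have hsumf : Summable fun k => ‖f k‖ :=
    Summable.of_nonneg_of_le (fun k => norm_nonneg _) hb hsummable_geom
  have hnorm : ‖u - symPow T n x‖ ≤ ∑' k, ‖f k‖ := by
    rw [← hdiff.tsum_eq]
    exact norm_tsum_le_tsum_norm hsumf
  have htsum : ∑' k, ‖f k‖ ≤ ∑' k, (C * r) * (1/2:ℝ)^k := Summable.tsum_le_tsum hb hsumf hsummable_geom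
  have hgeo : ∑' k : ℕ, (C * r) * (1/2:ℝ)^k = (C*r) * 2 := by
    rw [tsum_mul_left, tsum_geometric_two]
  refine ⟨u, hu_mem, ?_⟩
  calc ‖u - symPow T n x‖ ≤ ∑' k, ‖f k‖ := hnorm
    _ ≤ (C*r) * 2 := hgeo ▸ htsum
    _ = (2 * C) * r := by ring

end Approx

end Aux

/-- For a row contraction `T` on `H` and any subspace `S ⊆ H`, the closed span
over `z ∈ 𝔹^d` of `(1 - Tz*)⁻¹ S` equals the closed span over multi-indices `n ∈ ℕ^d` of
`T^n S`, where `T^n` is the symmetrized monomial. -/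
theorem stmt_7 {d : ℕ} {H : Type*} [NormedAddCommGroup H] [InnerProductSpace ℂ H]
    [CompleteSpace H]
    (T : PiLp 2 (fun _ : Fin d => H) →L[ℂ] H) (hT : ‖T‖ ≤ 1)
    (S : Submodule ℂ H) :
    (⨆ z : {z : EuclideanSpace ℂ (Fin d) // ‖z‖ < 1},
        Submodule.map ((Ring.inverse (1 - T ∘L colOp z.1) : H →L[ℂ] H) : H →ₗ[ℂ] H) S).topologicalClosure
    = (⨆ n : Fin d → ℕ,
        Submodule.map ((symPow T n : H →L[ℂ] H) : H →ₗ[ℂ] H) S).topologicalClosure := by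
  classical
  apply le_antisymm
  · refine Submodule.topologicalClosure_minimal _ ?_ (Submodule.isClosed_topologicalClosure _)
    refine iSup_le fun z => ?_
    rw [Submodule.map_le_iff_le_comap]
    intro x hx
    rw [Submodule.mem_comap]
    have hAlt : ‖T ∘L colOp z.1‖ < 1 := lt_of_le_of_lt (norm_colOp_comp_le T hT z.1) z.2
    have hsum : HasSum (fun k : ℕ => ((T ∘L colOp z.1) ^ k) x)
        ((Ring.inverse (1 - T ∘L colOp z.1) : H →L[ℂ] H) x) :=
      (hasSum_geom_series_inverse _ hAlt).mapL (ContinuousLinearMap.apply ℂ H x)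
    rw [← SetLike.mem_coe, Submodule.topologicalClosure_coe]
    refine mem_closure_of_tendsto hsum (Filter.Eventually.of_forall fun t => ?_)
    exact Submodule.sum_mem _ fun k _ => pow_apply_mem T z.1 k S hx
  · refine Submodule.topologicalClosure_minimal _ ?_ (Submodule.isClosed_topologicalClosure _)
    refine iSup_le fun n => ?_
    rw [Submodule.map_le_iff_le_comap]
    intro x hx
    rw [Submodule.mem_comap, ← SetLike.mem_coe, Submodule.topologicalClosure_coe]
    set rseq : ℕ → ℝ := fun i => (1 / (2 * ((d:ℝ) + 1))) * (1 / ((i:ℝ) + 1)) with hrseq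
    have hrpos : ∀ i, 0 < rseq i := by
      intro i
      rw [hrseq]
      positivity
    have hrle : ∀ i, rseq i * ((d:ℝ) + 1) ≤ 1/2 := by
      intro i
      rw [hrseq]
      have h1 : (1 / ((i:ℝ) + 1)) ≤ 1 := by
        rw [div_le_one (by positivity)]
        simp
      have h2 : (0:ℝ) < (d:ℝ) + 1 := by positivity
      calc (1 / (2 * ((d:ℝ) + 1))) * (1 / ((i:ℝ) + 1)) * ((d:ℝ) + 1)
          ≤ (1 / (2 * ((d:ℝ) + 1))) * 1 * ((d:ℝ) + 1) := by
            have := mul_le_mul_of_nonneg_left h1 (le_of_lt (by positivity :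
              (0:ℝ) < 1 / (2 * ((d:ℝ) + 1))))
            exact mul_le_mul_of_nonneg_right this (le_of_lt h2)
        _ = 1/2 := by field_simp
    choose u hu hbnd using fun i => approx_step T hT S n hx (hrpos i) (hrle i)
    have hrtend : Filter.Tendsto rseq Filter.atTop (nhds 0) := by
      rw [hrseq]
      have := tendsto_one_div_add_atTop_nhds_zero_nat (𝕜 := ℝ)
      have h2 := this.const_mul (1 / (2 * ((d:ℝ) + 1)))
      simpa using h2
    have htend : Filter.Tendsto u Filter.atTop (nhds (symPow T n x)) := by
      rw [← tendsto_sub_nhds_zero_iff]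
      refine squeeze_zero_norm (fun i => hbnd i) ?_
      have h2 := hrtend.const_mul (2 * (‖x‖ * (d:ℝ)^(∑ c, n c) * ((d:ℝ)+1) * 2^((∑ c, n c)+1)))
      rw [mul_zero] at h2
      exact h2
    exact mem_closure_of_tendsto htend (Filter.Eventually.of_forall fun i => hu i)

end
end
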